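/- arXiv:math/0304442 — 2 statements merged into one kernel-verified Lean document; each statement's English description precedes it below -/
import Mathlib

section
/- Suppose the pushout product axiom holds in a monoidal model category (M, ⊗, 𝟙), and suppose that for every cofibrant object Z with a weak equivalence Z → 𝟙 and every cofibrant X, the composite Z ⊗ X → 𝟙 ⊗ X ≅ X is a weak equivalence. Then the tensor product preserves weak equivalences on the full subcategory M_cI consisting of cofibrant objects together with the unit 𝟙: if f : A → A' and g : B → B' are weak equivalences in M_cI, then f ⊗ g is a weak equivalence. -/
open CategoryTheory Limits MonoidalCategory

universe v u

variable {M : Type u} [Category.{v} M] [MonoidalCategory M] [HasPushouts M] [HasInitial M]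
  [HasBinaryCoproducts M]

/-- The pushout product `(A₁ ⊗ B₂) ⊔_{A₁ ⊗ B₁} (A₂ ⊗ B₁) ⟶ A₂ ⊗ B₂` of two morphisms. -/
noncomputable def pushoutProduct {A₁ A₂ B₁ B₂ : M} (f : A₁ ⟶ A₂) (g : B₁ ⟶ B₂) :
    pushout (A₁ ◁ g) (f ▷ B₁) ⟶ A₂ ⊗ B₂ :=
  pushout.desc (f ▷ B₂) (A₂ ◁ g) (whisker_exchange f g)

/-- Membership in the full subcategory `M_cI`: cofibrant objects together with the unit. -/
def memMcI (Cof : MorphismProperty M) (X : M) : Prop :=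
  Cof (initial.to X) ∨ X = 𝟙_ M

/-- If the pushout product axiom holds and the unit axiom holds (for every cofibrant `Z`
with a weak equivalence `Z ⟶ 𝟙` and every cofibrant `X`, the composites
`Z ⊗ X ⟶ 𝟙 ⊗ X ≅ X` and `X ⊗ Z ⟶ X ⊗ 𝟙 ≅ X` are weak equivalences), then the tensor
product preserves weak equivalences on the full subcategory `M_cI` of cofibrant objects
together with the unit. -/
theorem tensor_preserves_weq_on_McI
    (Weq Cof : MorphismProperty M)
    [Weq.HasTwoOutOfThreeProperty] [Weq.ContainsIdentities]
    (hCofIso : Cof.RespectsIso) (hWeqIso : Weq.RespectsIso)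
    (hCofComp : ∀ {X Y Z : M} (f : X ⟶ Y) (g : Y ⟶ Z), Cof f → Cof g → Cof (f ≫ g))
    (hCofOfIso : ∀ {X Y : M} (f : X ⟶ Y), IsIso f → Cof f)
    (hCofCobase : Cof.IsStableUnderCobaseChange)
    (hfact : ∀ {X Y : M} (f : X ⟶ Y),
      ∃ (Z : M) (i : X ⟶ Z) (p : Z ⟶ Y), Cof i ∧ Weq p ∧ i ≫ p = f)
    (hinitL : ∀ B : M, IsInitial ((⊥_ M) ⊗ B))
    (hinitR : ∀ B : M, IsInitial (B ⊗ (⊥_ M)))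
    (ppa : ∀ {A₁ A₂ B₁ B₂ : M} (f : A₁ ⟶ A₂) (g : B₁ ⟶ B₂),
      Cof f → Cof g → Cof (pushoutProduct f g))
    (ppa' : ∀ {A₁ A₂ B₁ B₂ : M} (f : A₁ ⟶ A₂) (g : B₁ ⟶ B₂),
      Cof f → Cof g → (Weq f ∨ Weq g) → Weq (pushoutProduct f g))
    (hunitL : ∀ (Z : M), Cof (initial.to Z) → ∀ (w : Z ⟶ 𝟙_ M), Weq w →
      ∀ (X : M), Cof (initial.to X) → Weq ((w ▷ X) ≫ (λ_ X).hom))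
    (hunitR : ∀ (Z : M), Cof (initial.to Z) → ∀ (w : Z ⟶ 𝟙_ M), Weq w →
      ∀ (X : M), Cof (initial.to X) → Weq ((X ◁ w) ≫ (ρ_ X).hom))
    {A A' B B' : M} (f : A ⟶ A') (g : B ⟶ B')
    (hA : memMcI Cof A) (hA' : memMcI Cof A')
    (hB : memMcI Cof B) (hB' : memMcI Cof B')
    (hf : Weq f) (hg : Weq g) :
    Weq (f ⊗ₘ g) := by
  haveI := hWeqIso
  -- isomorphisms are weak equivalences
  have weq_iso : ∀ {X Y : M} (e : X ⟶ Y), IsIso e → Weq e := by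
    intro X Y e he
    haveI := he
    exact Weq.of_isIso e
  have cof_init : ∀ {X Y : M} (i : X ⟶ Y), Cof (initial.to X) → Cof i →
      Cof (initial.to Y) := by
    intro X Y i hX hi
    have : initial.to Y = initial.to X ≫ i := Subsingleton.elim _ _
    rw [this]
    exact hCofComp _ _ hX hi
  -- trivial cofibrations whisker on the right
  have trivR : ∀ {A Z : M} (i : A ⟶ Z), Cof i → Weq i → ∀ B : M,
      Cof (initial.to B) → Weq (i ▷ B) := by
    intro A Z i hci hwi B hB
    have h := ppa' i (initial.to B) hci hB (Or.inl hwi)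
    have heq : pushout.inl (A ◁ initial.to B) (i ▷ (⊥_ M)) ≫
        pushoutProduct i (initial.to B) = i ▷ B := pushout.inl_desc _ _ _
    have hiso : IsIso (pushout.inl (A ◁ initial.to B) (i ▷ (⊥_ M))) := by
      refine ⟨pushout.desc (𝟙 _) ((hinitR Z).to _) ((hinitR A).hom_ext _ _), ?_, ?_⟩
      · exact pushout.inl_desc _ _ _
      · apply pushout.hom_ext
        · exact (pushout.inl_desc_assoc _ _ _ _).trans ((Category.id_comp _).trans (Category.comp_id _).symm)
        · exact (hinitR Z).hom_ext _ _
    rw [← heq]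
    exact Weq.comp_mem _ _ (weq_iso _ hiso) h
  -- trivial cofibrations whisker on the left
  have trivL : ∀ {B B' : M} (i : B ⟶ B'), Cof i → Weq i → ∀ A : M,
      Cof (initial.to A) → Weq (A ◁ i) := by
    intro B B' i hci hwi A hA
    have h := ppa' (initial.to A) i hA hci (Or.inr hwi)
    have heq : pushout.inr ((⊥_ M) ◁ i) (initial.to A ▷ B) ≫
        pushoutProduct (initial.to A) i = A ◁ i := pushout.inr_desc _ _ _
    have hiso : IsIso (pushout.inr ((⊥_ M) ◁ i) (initial.to A ▷ B)) := by
      refine ⟨pushout.desc ((hinitL B').to _) (𝟙 _) ((hinitL B).hom_ext _ _), ?_, ?_⟩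
      · exact pushout.inr_desc _ _ _
      · apply pushout.hom_ext
        · exact (hinitL B').hom_ext _ _
        · exact (pushout.inr_desc_assoc _ _ _ _).trans ((Category.id_comp _).trans (Category.comp_id _).symm)
    rw [← heq]
    exact Weq.comp_mem _ _ (weq_iso _ hiso) h
  -- Ken Brown: weak equivalences between cofibrant objects whisker on the right
  have kbR : ∀ {Z X : M} (p : Z ⟶ X), Cof (initial.to Z) → Cof (initial.to X) →
      Weq p → ∀ B : M, Cof (initial.to B) → Weq (p ▷ B) := by
    intro Z X p hZ hX hp B hB
    obtain ⟨C, j, r, hcj, hwr, hjr⟩ := hfact (coprod.desc p (𝟙 X) : Z ⨿ X ⟶ X)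
    have hinl : Cof (coprod.inl : Z ⟶ Z ⨿ X) :=
      hCofCobase.of_isPushout (IsPushout.of_hasBinaryCoproduct' Z X) hX
    have hinr : Cof (coprod.inr : X ⟶ Z ⨿ X) :=
      hCofCobase.of_isPushout (IsPushout.of_hasBinaryCoproduct' Z X).flip hZ
    have hj₁c : Cof (coprod.inl ≫ j : Z ⟶ C) := hCofComp _ _ hinl hcj
    have hj₂c : Cof (coprod.inr ≫ j : X ⟶ C) := hCofComp _ _ hinr hcj
    have hj₁comp : (coprod.inl ≫ j : Z ⟶ C) ≫ r = p := by
      rw [Category.assoc, hjr, coprod.inl_desc]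
    have hj₂comp : (coprod.inr ≫ j : X ⟶ C) ≫ r = 𝟙 X := by
      rw [Category.assoc, hjr, coprod.inr_desc]
    have hj₁w : Weq (coprod.inl ≫ j : Z ⟶ C) :=
      Weq.of_postcomp _ r hwr (by rw [hj₁comp]; exact hp)
    have hj₂w : Weq (coprod.inr ≫ j : X ⟶ C) :=
      Weq.of_postcomp _ r hwr (by rw [hj₂comp]; exact Weq.id_mem _)
    have h1 : Weq ((coprod.inl ≫ j : Z ⟶ C) ▷ B) := trivR _ hj₁c hj₁w B hB
    have h2 : Weq ((coprod.inr ≫ j : X ⟶ C) ▷ B) := trivR _ hj₂c hj₂w B hB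
    have hr : Weq (r ▷ B) := by
      refine Weq.of_precomp ((coprod.inr ≫ j : X ⟶ C) ▷ B) (r ▷ B) h2 ?_
      rw [← comp_whiskerRight, hj₂comp, id_whiskerRight]
      exact Weq.id_mem _
    have : p ▷ B = (coprod.inl ≫ j : Z ⟶ C) ▷ B ≫ r ▷ B := by
      rw [← comp_whiskerRight, hj₁comp]
    rw [this]
    exact Weq.comp_mem _ _ h1 hr
  -- Ken Brown: weak equivalences between cofibrant objects whisker on the left
  have kbL : ∀ {Z X : M} (p : Z ⟶ X), Cof (initial.to Z) → Cof (initial.to X) →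
      Weq p → ∀ A : M, Cof (initial.to A) → Weq (A ◁ p) := by
    intro Z X p hZ hX hp A hA
    obtain ⟨C, j, r, hcj, hwr, hjr⟩ := hfact (coprod.desc p (𝟙 X) : Z ⨿ X ⟶ X)
    have hinl : Cof (coprod.inl : Z ⟶ Z ⨿ X) :=
      hCofCobase.of_isPushout (IsPushout.of_hasBinaryCoproduct' Z X) hX
    have hinr : Cof (coprod.inr : X ⟶ Z ⨿ X) :=
      hCofCobase.of_isPushout (IsPushout.of_hasBinaryCoproduct' Z X).flip hZ
    have hj₁c : Cof (coprod.inl ≫ j : Z ⟶ C) := hCofComp _ _ hinl hcj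
    have hj₂c : Cof (coprod.inr ≫ j : X ⟶ C) := hCofComp _ _ hinr hcj
    have hj₁comp : (coprod.inl ≫ j : Z ⟶ C) ≫ r = p := by
      rw [Category.assoc, hjr, coprod.inl_desc]
    have hj₂comp : (coprod.inr ≫ j : X ⟶ C) ≫ r = 𝟙 X := by
      rw [Category.assoc, hjr, coprod.inr_desc]
    have hj₁w : Weq (coprod.inl ≫ j : Z ⟶ C) :=
      Weq.of_postcomp _ r hwr (by rw [hj₁comp]; exact hp)
    have hj₂w : Weq (coprod.inr ≫ j : X ⟶ C) :=
      Weq.of_postcomp _ r hwr (by rw [hj₂comp]; exact Weq.id_mem _)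
    have h1 : Weq (A ◁ (coprod.inl ≫ j : Z ⟶ C)) := trivL _ hj₁c hj₁w A hA
    have h2 : Weq (A ◁ (coprod.inr ≫ j : X ⟶ C)) := trivL _ hj₂c hj₂w A hA
    have hr : Weq (A ◁ r) := by
      refine Weq.of_precomp (A ◁ (coprod.inr ≫ j : X ⟶ C)) (A ◁ r) h2 ?_
      rw [← MonoidalCategory.whiskerLeft_comp, hj₂comp, MonoidalCategory.whiskerLeft_id]
      exact Weq.id_mem _
    have : A ◁ p = A ◁ (coprod.inl ≫ j : Z ⟶ C) ≫ A ◁ r := by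
      rw [← MonoidalCategory.whiskerLeft_comp, hj₁comp]
    rw [this]
    exact Weq.comp_mem _ _ h1 hr
  -- right whiskering of a weq from a cofibrant object to an object of M_cI
  have L1R : ∀ {Z X : M} (p : Z ⟶ X), Cof (initial.to Z) → memMcI Cof X →
      Weq p → ∀ B : M, Cof (initial.to B) → Weq (p ▷ B) := by
    intro Z X p hZ hX hp B hB
    rcases hX with hX | rfl
    · exact kbR p hZ hX hp B hB
    · have h := hunitL Z hZ p hp B hB
      exact Weq.of_postcomp _ (λ_ B).hom (weq_iso _ inferInstance) h
  have L1L : ∀ {Z X : M} (p : Z ⟶ X), Cof (initial.to Z) → memMcI Cof X →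
      Weq p → ∀ A : M, Cof (initial.to A) → Weq (A ◁ p) := by
    intro Z X p hZ hX hp A hA
    rcases hX with hX | rfl
    · exact kbL p hZ hX hp A hA
    · have h := hunitR Z hZ p hp A hA
      exact Weq.of_postcomp _ (ρ_ A).hom (weq_iso _ inferInstance) h
  -- main right whiskering lemma
  have mainR : ∀ {A₀ A₁ : M} (f₀ : A₀ ⟶ A₁), memMcI Cof A₀ → memMcI Cof A₁ →
      Weq f₀ → ∀ B₀ : M, Cof (initial.to B₀) → Weq (f₀ ▷ B₀) := by
    intro A₀ A₁ f₀ h₀ h₁ hw B₀ hB₀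
    rcases h₀ with h₀ | rfl
    · exact L1R f₀ h₀ h₁ hw B₀ hB₀
    · -- A₀ = 𝟙 : use a cofibrant replacement of the unit
      obtain ⟨Q, iQ, w, hiQ, hww, hiw⟩ := hfact (initial.to (𝟙_ M))
      have hQ : Cof (initial.to Q) := by
        have : initial.to Q = iQ := Subsingleton.elim _ _
        rw [this]; exact hiQ
      have h1 : Weq (w ▷ B₀) := L1R w hQ (Or.inr rfl) hww B₀ hB₀
      have h2 : Weq ((w ≫ f₀) ▷ B₀) :=
        L1R (w ≫ f₀) hQ h₁ (Weq.comp_mem _ _ hww hw) B₀ hB₀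
      refine Weq.of_precomp (w ▷ B₀) (f₀ ▷ B₀) h1 ?_
      rw [← comp_whiskerRight]
      exact h2
  -- main left whiskering lemma
  have mainL : ∀ {B₀ B₁ : M} (g₀ : B₀ ⟶ B₁), memMcI Cof B₀ → memMcI Cof B₁ →
      Weq g₀ → ∀ A₀ : M, Cof (initial.to A₀) → Weq (A₀ ◁ g₀) := by
    intro B₀ B₁ g₀ h₀ h₁ hw A₀ hA₀
    rcases h₀ with h₀ | rfl
    · exact L1L g₀ h₀ h₁ hw A₀ hA₀
    · obtain ⟨Q, iQ, w, hiQ, hww, hiw⟩ := hfact (initial.to (𝟙_ M))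
      have hQ : Cof (initial.to Q) := by
        have : initial.to Q = iQ := Subsingleton.elim _ _
        rw [this]; exact hiQ
      have h1 : Weq (A₀ ◁ w) := L1L w hQ (Or.inr rfl) hww A₀ hA₀
      have h2 : Weq (A₀ ◁ (w ≫ g₀)) :=
        L1L (w ≫ g₀) hQ h₁ (Weq.comp_mem _ _ hww hw) A₀ hA₀
      refine Weq.of_precomp (A₀ ◁ w) (A₀ ◁ g₀) h1 ?_
      rw [← MonoidalCategory.whiskerLeft_comp]
      exact h2
  -- put the pieces together
  rw [MonoidalCategory.tensorHom_def]
  have hfB : Weq (f ▷ B) := by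
    rcases hB with hB | rfl
    · exact mainR f hA hA' hf B hB
    · refine Weq.of_postcomp (f ▷ (𝟙_ M)) (ρ_ A').hom (weq_iso _ inferInstance) ?_
      rw [MonoidalCategory.rightUnitor_naturality]
      exact Weq.comp_mem _ _ (weq_iso _ inferInstance) hf
  have hAg : Weq (A' ◁ g) := by
    rcases hA' with hA'c | rfl
    · exact mainL g hB hB' hg A' hA'c
    · refine Weq.of_postcomp ((𝟙_ M) ◁ g) (λ_ B').hom (weq_iso _ inferInstance) ?_
      rw [MonoidalCategory.leftUnitor_naturality]
      exact Weq.comp_mem _ _ (weq_iso _ inferInstance) hg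
  exact Weq.comp_mem _ _ hfB hAg
end

section
/- In a monoidal model category, the unit axiom for one cofibrant replacement implies it for all: if Q𝟙 → 𝟙 is a trivial fibration with Q𝟙 cofibrant such that Q𝟙 ⊗ X → 𝟙 ⊗ X ≅ X is a weak equivalence for every cofibrant X, then for ANY cofibrant Z with a weak equivalence Z → 𝟙 and any cofibrant X, the map Z ⊗ X → 𝟙 ⊗ X ≅ X is a weak equivalence. -/
open CategoryTheory Limits MonoidalCategory

universe v u

variable {M : Type u} [Category.{v} M] [MonoidalCategory M] [HasPushouts M] [HasInitial M]
  [HasBinaryCoproducts M]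

/-- In a monoidal model category, the unit axiom for one cofibrant replacement implies it
for all: if `Q𝟙 ⟶ 𝟙` is a trivial fibration with `Q𝟙` cofibrant such that
`Q𝟙 ⊗ X ⟶ 𝟙 ⊗ X ≅ X` is a weak equivalence for every cofibrant `X`, then for any
cofibrant `Z` with a weak equivalence `Z ⟶ 𝟙` and any cofibrant `X`, the map
`Z ⊗ X ⟶ 𝟙 ⊗ X ≅ X` is a weak equivalence. -/
theorem unit_axiom_of_one_cofibrant_replacement
    (Weq Cof Fib : MorphismProperty M)
    [Weq.HasTwoOutOfThreeProperty] [Weq.ContainsIdentities]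
    (hCofIso : Cof.RespectsIso) (hWeqIso : Weq.RespectsIso)
    (hCofComp : ∀ {X Y Z : M} (f : X ⟶ Y) (g : Y ⟶ Z), Cof f → Cof g → Cof (f ≫ g))
    (hCofOfIso : ∀ {X Y : M} (f : X ⟶ Y), IsIso f → Cof f)
    (hCofCobase : Cof.IsStableUnderCobaseChange)
    (hfact : ∀ {X Y : M} (f : X ⟶ Y),
      ∃ (Z : M) (i : X ⟶ Z) (p : Z ⟶ Y), Cof i ∧ Weq p ∧ i ≫ p = f)
    (hlift : ∀ {X Y Z W : M} (i : X ⟶ Y) (p : Z ⟶ W),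
      Cof i → Fib p → Weq p → HasLiftingProperty i p)
    (hinitL : ∀ B : M, IsInitial ((⊥_ M) ⊗ B))
    (hinitR : ∀ B : M, IsInitial (B ⊗ (⊥_ M)))
    (ppa : ∀ {A₁ A₂ B₁ B₂ : M} (f : A₁ ⟶ A₂) (g : B₁ ⟶ B₂),
      Cof f → Cof g → Cof (pushoutProduct f g))
    (ppa' : ∀ {A₁ A₂ B₁ B₂ : M} (f : A₁ ⟶ A₂) (g : B₁ ⟶ B₂),
      Cof f → Cof g → (Weq f ∨ Weq g) → Weq (pushoutProduct f g))
    (Q : M) (hQcof : Cof (initial.to Q)) (p : Q ⟶ 𝟙_ M)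
    (hpFib : Fib p) (hpWeq : Weq p)
    (hQ : ∀ (X : M), Cof (initial.to X) → Weq ((p ▷ X) ≫ (λ_ X).hom))
    (Z : M) (hZcof : Cof (initial.to Z)) (w : Z ⟶ 𝟙_ M) (hw : Weq w)
    (X : M) (hXcof : Cof (initial.to X)) :
    Weq ((w ▷ X) ≫ (λ_ X).hom) := by
  haveI := hWeqIso
  haveI := hCofCobase
  -- Key: whiskering a trivial cofibration with the cofibrant `X` gives a weak equivalence.
  have key : ∀ {A B : M} (f : A ⟶ B), Cof f → Weq f → Weq (f ▷ X) := by
    intro A B f hf hfw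
    have hpo := ppa' f (initial.to X) hf hXcof (Or.inl hfw)
    haveI : IsIso (f ▷ (⊥_ M)) :=
      ⟨(hinitR B).to _, (hinitR A).hom_ext _ _, (hinitR B).hom_ext _ _⟩
    have heq : pushout.inl (A ◁ initial.to X) (f ▷ (⊥_ M)) ≫
        pushoutProduct f (initial.to X) = f ▷ X := by
      exact pushout.inl_desc _ _ _
    rw [← heq, Weq.cancel_left_of_respectsIso]
    exact hpo
  -- Lift `w` along the trivial fibration `p`.
  haveI := hlift (initial.to Z) p hZcof hpFib hpWeq
  have sq : CommSq (initial.to Q) (initial.to Z) p w := ⟨initial.hom_ext _ _⟩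
  set l : Z ⟶ Q := sq.lift with hl
  have hlp : l ≫ p = w := sq.fac_right
  have hlw : Weq l := Weq.of_postcomp l p hpWeq (by rwa [hlp])
  -- Ken Brown's lemma: factor `coprod.desc l (𝟙 Q) : Z ⨿ Q ⟶ Q`.
  obtain ⟨V, j, s, hj, hs, hfac⟩ := hfact (coprod.desc l (𝟙 Q))
  have hinl : Cof (coprod.inl : Z ⟶ Z ⨿ Q) :=
    MorphismProperty.of_isPushout (IsPushout.of_hasBinaryCoproduct' Z Q) hQcof
  have hinr : Cof (coprod.inr : Q ⟶ Z ⨿ Q) :=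
    MorphismProperty.of_isPushout (IsPushout.of_hasBinaryCoproduct' Z Q).flip hZcof
  have h1 : (coprod.inl ≫ j) ≫ s = l := by rw [Category.assoc, hfac, coprod.inl_desc]
  have h2 : (coprod.inr ≫ j) ≫ s = 𝟙 Q := by rw [Category.assoc, hfac, coprod.inr_desc]
  have hi1w : Weq (coprod.inl ≫ j) := Weq.of_postcomp _ s hs (by rwa [h1])
  have hi2w : Weq (coprod.inr ≫ j) := Weq.of_postcomp _ s hs (by rw [h2]; exact Weq.id_mem _)
  have hi1X : Weq ((coprod.inl ≫ j) ▷ X) := key _ (hCofComp _ _ hinl hj) hi1w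
  have hi2X : Weq ((coprod.inr ≫ j) ▷ X) := key _ (hCofComp _ _ hinr hj) hi2w
  have hsX : Weq (s ▷ X) := by
    refine Weq.of_precomp ((coprod.inr ≫ j) ▷ X) (s ▷ X) hi2X ?_
    rw [← comp_whiskerRight, h2, id_whiskerRight]
    exact Weq.id_mem _
  have hlX : Weq (l ▷ X) := by
    rw [← h1, comp_whiskerRight]
    exact Weq.comp_mem _ _ hi1X hsX
  rw [← hlp, comp_whiskerRight, Category.assoc]
  exact Weq.comp_mem _ _ hlX (hQ X hXcof)
end
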